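/- Suppose W₁₁, W₂₂, W₁₂, T₁₂ are real numbers in the set 𝒥_C, i.e., L₁ ≤ W₁₁ ≤ U₁, L₂ ≤ W₂₂ ≤ U₂, L₁₂ W₁₂ ≤ T₁₂ ≤ U₁₂ W₁₂, W₁₂ ≥ 0, W₁₁ W₂₂ = W₁₂² + T₁₂² (with 0 ≤ L₁ ≤ U₁, 0 ≤ L₂ ≤ U₂, L₁₂ ≤ U₁₂). Then with coefficients π₀,…,π₄ as in the convex-hull description, π₀ + π₁ W₁₁ + π₂ W₂₂ + π₃ W₁₂ + π₄ T₁₂ ≥ L₂ W₁₁ + L₁ W₂₂ - L₁ L₂. -/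

import Mathlib

noncomputable def f (x : ℝ) : ℝ := if x = 0 then 0 else (Real.sqrt (1 + x ^ 2) - 1) / x

lemma f_eq (x : ℝ) : f x = x / (1 + Real.sqrt (1 + x ^ 2)) := by
  unfold f
  rcases eq_or_ne x 0 with h | h
  · simp [h]
  · rw [if_neg h]
    have hs : Real.sqrt (1 + x ^ 2) ^ 2 = 1 + x ^ 2 := Real.sq_sqrt (by positivity)
    have hs0 : 0 < 1 + Real.sqrt (1 + x ^ 2) := by positivity
    field_simp
    nlinarith [hs]

lemma f_sq_lt_one (x : ℝ) : f x ^ 2 < 1 := by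
  rw [f_eq, div_pow]
  have hs : Real.sqrt (1 + x ^ 2) ^ 2 = 1 + x ^ 2 := Real.sq_sqrt (by positivity)
  have hs1 : 0 ≤ Real.sqrt (1 + x ^ 2) := Real.sqrt_nonneg _
  rw [div_lt_one (by positivity)]
  nlinarith

lemma f_mono {a b : ℝ} (h : a ≤ b) : f a ≤ f b := by
  rw [f_eq, f_eq]
  have hsa : Real.sqrt (1 + a ^ 2) ^ 2 = 1 + a ^ 2 := Real.sq_sqrt (by positivity)
  have hsb : Real.sqrt (1 + b ^ 2) ^ 2 = 1 + b ^ 2 := Real.sq_sqrt (by positivity)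
  have hsa0 : 0 ≤ Real.sqrt (1 + a ^ 2) := Real.sqrt_nonneg _
  have hsb0 : 0 ≤ Real.sqrt (1 + b ^ 2) := Real.sqrt_nonneg _
  rw [div_le_div_iff₀ (by positivity) (by positivity)]
  have key : a * Real.sqrt (1 + b ^ 2) ≤ b * Real.sqrt (1 + a ^ 2) := by
    rcases le_or_gt 0 a with ha | ha
    · nlinarith [mul_nonneg ha hsb0, mul_nonneg (ha.trans h) hsa0]
    · rcases le_or_gt b 0 with hb | hb
      · nlinarith [mul_nonneg (neg_nonneg.2 hb) hsa0, mul_nonneg (neg_nonneg.2 ha.le) hsb0]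
      · nlinarith [mul_nonneg hb.le hsa0, mul_nonneg (neg_nonneg.2 ha.le) hsb0]
  nlinarith [key]

lemma trig (L U W T : ℝ) (hLU : L ≤ U) (hW : 0 ≤ W) (h5 : L * W ≤ T) (h6 : T ≤ U * W) :
    Real.sqrt (W ^ 2 + T ^ 2) ≤
      (1 - f L * f U) / (1 + f L * f U) * W + (f L + f U) / (1 + f L * f U) * T := by
  set p := f L with hp
  set q := f U with hq
  have hpq : 0 < 1 + p * q := by
    nlinarith [f_sq_lt_one L, f_sq_lt_one U, sq_nonneg (f L + f U)]
  rcases hW.eq_or_lt with hW0 | hW0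
  · have hT : T = 0 := by
      have h5' : L * W ≤ T := h5
      have h6' : T ≤ U * W := h6
      rw [← hW0] at h5' h6'
      simp at h5' h6'
      linarith
    rw [← hW0, hT]
    norm_num
  · set r := Real.sqrt (W ^ 2 + T ^ 2) with hr
    have hr2 : r ^ 2 = W ^ 2 + T ^ 2 := Real.sq_sqrt (by positivity)
    have hr0 : 0 ≤ r := Real.sqrt_nonneg _
    have hrW : W ≤ r := by
      have h' : Real.sqrt (W ^ 2) ≤ r := Real.sqrt_le_sqrt (by nlinarith [sq_nonneg T])
      rwa [Real.sqrt_sq hW] at h'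
    have hWr : 0 < W + r := by linarith
    set t := f (T / W) with ht0
    have hsq : Real.sqrt (1 + (T / W) ^ 2) = r / W := by
      rw [show 1 + (T / W) ^ 2 = (r / W) ^ 2 by
        rw [div_pow, div_pow, hr2]; field_simp]
      exact Real.sqrt_sq (by positivity)
    have ht : t = T / (W + r) := by
      rw [ht0, f_eq, hsq]
      field_simp
    have e1 : W * (1 + t ^ 2) = r * (1 - t ^ 2) := by
      rw [ht]
      field_simp
      linear_combination (-(W + r)) * hr2
    have e2 : T * (1 + t ^ 2) = 2 * t * r := by
      rw [ht]
      field_simp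
      linear_combination (-T) * hr2
    have hpt : p ≤ t := by
      apply f_mono
      rw [le_div_iff₀ hW0]
      linarith
    have htq : t ≤ q := by
      apply f_mono
      rw [div_le_iff₀ hW0]
      linarith
    have key : ((1 - p * q) * W + (p + q) * T - (1 + p * q) * r) * (1 + t ^ 2)
        = 2 * r * (t - p) * (q - t) := by
      linear_combination (1 - p * q) * e1 + (p + q) * e2
    have h2 : 0 ≤ 2 * r * (t - p) * (q - t) := by
      apply mul_nonneg
      apply mul_nonneg
      · linarith
      · linarith
      · linarith
    have hfinal : 0 ≤ (1 - p * q) * W + (p + q) * T - (1 + p * q) * r := by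
      have h1t : (0:ℝ) < 1 + t ^ 2 := by positivity
      nlinarith [key, h2, h1t]
    rw [div_mul_eq_mul_div, div_mul_eq_mul_div, ← add_div, le_div_iff₀ hpq]
    linarith

lemma reduced (a b c d x y : ℝ) (ha : 0 ≤ a) (hab : a ≤ b) (hc : 0 ≤ c) (hcd : c ≤ d)
    (hax : a ≤ x) (hxb : x ≤ b) (hcy : c ≤ y) (hyd : y ≤ d) :
    c ^ 2 * x ^ 2 + a ^ 2 * y ^ 2 - a ^ 2 * c ^ 2 + a * b * c * d + c * d * x ^ 2
      + a * b * y ^ 2 ≤ (a + b) * (c + d) * (x * y) := by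
  have hGa : 0 ≤ a * (a + b) * ((y - c) * (d - y)) :=
    mul_nonneg (mul_nonneg ha (by linarith)) (mul_nonneg (by linarith) (by linarith))
  have hay : a * y ≤ a * d := mul_le_mul_of_nonneg_left hyd ha
  have hGb : 0 ≤ (a + b) * ((y - c) * ((b * c + b * d - a * c) - a * y)) := by
    apply mul_nonneg (by linarith)
    apply mul_nonneg
    · linarith
    · nlinarith [mul_le_mul_of_nonneg_right hab (by linarith : (0:ℝ) ≤ c + d)]
  rcases eq_or_lt_of_le hab with h | h
  · have hx : x = a := le_antisymm (h ▸ hxb) hax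
    subst hx
    nlinarith [hGa]
  · nlinarith [mul_nonneg (sub_nonneg.2 hxb) hGa, mul_nonneg (sub_nonneg.2 hax) hGb,
      mul_nonneg (mul_nonneg (mul_nonneg hc (by linarith : (0:ℝ) ≤ c + d))
        (mul_nonneg (sub_nonneg.2 hxb) (sub_nonneg.2 hax))) (by linarith : (0:ℝ) ≤ b - a), h]

theorem valid_inequality_lower (L₁ U₁ L₂ U₂ L₁₂ U₁₂ W₁₁ W₂₂ W₁₂ T₁₂ : ℝ)
    (hL₁ : 0 ≤ L₁) (hU₁ : L₁ ≤ U₁) (hL₂ : 0 ≤ L₂) (hU₂ : L₂ ≤ U₂) (hLU : L₁₂ ≤ U₁₂)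
    (h1 : L₁ ≤ W₁₁) (h2 : W₁₁ ≤ U₁) (h3 : L₂ ≤ W₂₂) (h4 : W₂₂ ≤ U₂)
    (h5 : L₁₂ * W₁₂ ≤ T₁₂) (h6 : T₁₂ ≤ U₁₂ * W₁₂) (h7 : 0 ≤ W₁₂)
    (h8 : W₁₁ * W₂₂ = W₁₂ ^ 2 + T₁₂ ^ 2) :
    -Real.sqrt (L₁ * L₂ * U₁ * U₂)
      + (-Real.sqrt (L₂ * U₂)) * W₁₁ + (-Real.sqrt (L₁ * U₁)) * W₂₂
      + ((Real.sqrt L₁ + Real.sqrt U₁) * (Real.sqrt L₂ + Real.sqrt U₂)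
          * ((1 - f L₁₂ * f U₁₂) / (1 + f L₁₂ * f U₁₂))) * W₁₂
      + ((Real.sqrt L₁ + Real.sqrt U₁) * (Real.sqrt L₂ + Real.sqrt U₂)
          * ((f L₁₂ + f U₁₂) / (1 + f L₁₂ * f U₁₂))) * T₁₂
      ≥ L₂ * W₁₁ + L₁ * W₂₂ - L₁ * L₂ := by
  have hU₁0 : 0 ≤ U₁ := hL₁.trans hU₁
  have hU₂0 : 0 ≤ U₂ := hL₂.trans hU₂
  have hW₁₁0 : 0 ≤ W₁₁ := hL₁.trans h1
  have hW₂₂0 : 0 ≤ W₂₂ := hL₂.trans h3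
  set a := Real.sqrt L₁ with hadef
  set b := Real.sqrt U₁ with hbdef
  set c := Real.sqrt L₂ with hcdef
  set d := Real.sqrt U₂ with hddef
  set x := Real.sqrt W₁₁ with hxdef
  set y := Real.sqrt W₂₂ with hydef
  have ha2 : a ^ 2 = L₁ := Real.sq_sqrt hL₁
  have hb2 : b ^ 2 = U₁ := Real.sq_sqrt hU₁0
  have hc2 : c ^ 2 = L₂ := Real.sq_sqrt hL₂
  have hd2 : d ^ 2 = U₂ := Real.sq_sqrt hU₂0
  have hx2 : x ^ 2 = W₁₁ := Real.sq_sqrt hW₁₁0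
  have hy2 : y ^ 2 = W₂₂ := Real.sq_sqrt hW₂₂0
  have ha : 0 ≤ a := Real.sqrt_nonneg _
  have hc : 0 ≤ c := Real.sqrt_nonneg _
  have hab : a ≤ b := Real.sqrt_le_sqrt hU₁
  have hcd : c ≤ d := Real.sqrt_le_sqrt hU₂
  have hax : a ≤ x := Real.sqrt_le_sqrt h1
  have hxb : x ≤ b := Real.sqrt_le_sqrt h2
  have hcy : c ≤ y := Real.sqrt_le_sqrt h3
  have hyd : y ≤ d := Real.sqrt_le_sqrt h4
  have hs1 : Real.sqrt (L₁ * L₂ * U₁ * U₂) = a * c * b * d := by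
    rw [Real.sqrt_mul (by positivity), Real.sqrt_mul (by positivity),
      Real.sqrt_mul hL₁]
  have hs2 : Real.sqrt (L₂ * U₂) = c * d := Real.sqrt_mul hL₂ _
  have hs3 : Real.sqrt (L₁ * U₁) = a * b := Real.sqrt_mul hL₁ _
  have htrig := trig L₁₂ U₁₂ W₁₂ T₁₂ hLU h7 h5 h6
  have hW12 : Real.sqrt (W₁₂ ^ 2 + T₁₂ ^ 2) = x * y := by
    rw [← h8, Real.sqrt_mul hW₁₁0]
  rw [hW12] at htrig
  have hK : (0:ℝ) ≤ (a + b) * (c + d) := by positivity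
  have hKtrig : (a + b) * (c + d) * (x * y) ≤ (a + b) * (c + d) *
      ((1 - f L₁₂ * f U₁₂) / (1 + f L₁₂ * f U₁₂) * W₁₂ +
        (f L₁₂ + f U₁₂) / (1 + f L₁₂ * f U₁₂) * T₁₂) :=
    mul_le_mul_of_nonneg_left htrig hK
  have hred := reduced a b c d x y ha hab hc hcd hax hxb hcy hyd
  rw [ge_iff_le, hs1, hs2, hs3, ← ha2, ← hc2, ← hx2, ← hy2]
  linarith [hKtrig, hred]
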